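/- Let G be a Hausdorff topological group, and let λ₁, λ₂ : ℂ* → G be group homomorphisms. Suppose C ∈ G is such that the function t ↦ λ₁(t)·C·λ₂(t)^{-1} converges to some C₀ ∈ G as t → 0 (along the filter of punctured neighborhoods of 0 in ℂ*). Then λ₁(s)·C₀·λ₂(s)^{-1} = C₀ for every s ∈ ℂ*; i.e. the limit C₀ intertwines λ₁ and λ₂. -/

import Mathlib

open Filter Topology

/-- If `λ₁(t)·C·λ₂(t)⁻¹` converges to `C₀` as `t → 0` (along punctured
neighbourhoods of `0` in `ℂ*`), then `λ₁(s)·C₀·λ₂(s)⁻¹ = C₀` for every `s`. -/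
theorem limit_intertwines (G : Type*) [Group G] [TopologicalSpace G]
    [IsTopologicalGroup G] [T2Space G]
    (lam1 lam2 : ℂˣ →* G) (C C₀ : G)
    (hlim : Tendsto (fun t : ℂˣ => lam1 t * C * (lam2 t)⁻¹)
      (Filter.comap (Units.val : ℂˣ → ℂ) (𝓝[≠] (0 : ℂ))) (𝓝 C₀)) :
    ∀ s : ℂˣ, lam1 s * C₀ * (lam2 s)⁻¹ = C₀ := by
  intro s
  set L : Filter ℂˣ := Filter.comap (Units.val : ℂˣ → ℂ) (𝓝[≠] (0 : ℂ)) with hL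
  have hLne : L.NeBot := by
    rw [hL]
    apply Filter.comap_neBot
    intro U hU
    obtain ⟨ε, hε, hball⟩ := Metric.mem_nhdsWithin_iff.mp hU
    refine ⟨Units.mk0 ((ε/2 : ℝ) : ℂ) (Complex.ofReal_ne_zero.mpr (by positivity)), hball ?_⟩
    constructor
    · simp only [Metric.mem_ball, Units.val_mk0, dist_zero_right, Complex.norm_real,
        Real.norm_eq_abs, abs_of_pos (by positivity : (0:ℝ) < ε/2)]
      linarith
    · simp [Complex.ofReal_ne_zero, hε.ne']
  -- multiplication by s preserves L
  have hmul : Tendsto (fun t : ℂˣ => s * t) L L := by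
    rw [hL, tendsto_comap_iff]
    have hval : Tendsto (Units.val : ℂˣ → ℂ) L (𝓝[≠] (0 : ℂ)) := by
      rw [hL]; exact tendsto_comap
    have h2 : Tendsto (fun z : ℂ => (s : ℂ) * z) (𝓝[≠] (0 : ℂ)) (𝓝[≠] (0 : ℂ)) := by
      apply tendsto_nhdsWithin_of_tendsto_nhds_of_eventually_within
      · have h := ((continuous_const.mul continuous_id).tendsto (0 : ℂ) :
          Tendsto (fun z : ℂ => (s : ℂ) * z) (𝓝 0) (𝓝 ((s : ℂ) * 0)))
        have h0 : Tendsto (fun z : ℂ => (s : ℂ) * z) (𝓝 0) (𝓝 0) := by simp at h; exact h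
        exact h0.mono_left nhdsWithin_le_nhds
      · filter_upwards [self_mem_nhdsWithin] with z hz
        simp only [Set.mem_compl_iff, Set.mem_singleton_iff] at hz ⊢
        exact mul_ne_zero s.ne_zero hz
    have : Units.val ∘ (fun t : ℂˣ => s * t) = (fun z : ℂ => (s : ℂ) * z) ∘ Units.val := by
      funext t; simp
    rw [this]
    exact h2.comp hval
  have h1 : Tendsto (fun t : ℂˣ => lam1 (s * t) * C * (lam2 (s * t))⁻¹) L (𝓝 C₀) :=
    hlim.comp hmul
  have h2 : Tendsto (fun t : ℂˣ => lam1 s * (lam1 t * C * (lam2 t)⁻¹) * (lam2 s)⁻¹) L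
      (𝓝 (lam1 s * C₀ * (lam2 s)⁻¹)) := by
    exact (hlim.const_mul _).mul_const _
  have heq : (fun t : ℂˣ => lam1 (s * t) * C * (lam2 (s * t))⁻¹)
      = (fun t : ℂˣ => lam1 s * (lam1 t * C * (lam2 t)⁻¹) * (lam2 s)⁻¹) := by
    funext t
    simp [map_mul, mul_inv_rev, mul_assoc]
  rw [heq] at h1
  exact tendsto_nhds_unique h2 h1
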